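/- The optimal discriminator attains the Jensen–Shannon divergence: if P and Q are probability measures on X that are absolutely continuous with respect to a σ-finite measure μ with densities p and q satisfying p(x) + q(x) > 0 μ-almost everywhere, then the discriminator d*(x) = p(x)/(p(x)+q(x)) satisfies ∫ ln(d*(x)) dP(x) + ∫ ln(1−d*(x)) dQ(x) = 2·JS(P,Q) − ln 4, where JS(P,Q) = (1/2)·KL(P ‖ M) + (1/2)·KL(Q ‖ M) with M = (1/2)(P + Q). -/

import Mathlib

open MeasureTheory
open scoped ENNReal

/-- Kullback–Leibler divergence `KL(P ‖ M) = ∫ ln (dP/dM) dP` (as a real number,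
via the Radon–Nikodym derivative). -/
noncomputable def klDiv' {X : Type*} [MeasurableSpace X] (P M : Measure X) : ℝ :=
  ∫ x, Real.log ((P.rnDeriv M) x).toReal ∂P

/-- Jensen–Shannon divergence `JS(P,Q) = (1/2)·KL(P‖M) + (1/2)·KL(Q‖M)` with the
mixture `M = (1/2)(P + Q)`. -/
noncomputable def jsDiv' {X : Type*} [MeasurableSpace X] (P Q : Measure X) : ℝ :=
  (1 / 2) * klDiv' P ((2 : ℝ≥0∞)⁻¹ • (P + Q))
    + (1 / 2) * klDiv' Q ((2 : ℝ≥0∞)⁻¹ • (P + Q))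

/-- The optimal discriminator `d*(x) = p(x)/(p(x)+q(x))` attains the
Jensen–Shannon divergence: its objective equals `2·JS(P,Q) − ln 4`. -/
lemma aux_kl {X : Type*} [MeasurableSpace X]
    (μ : Measure X) [SigmaFinite μ]
    (p q : X → ℝ) (hp : Measurable p) (hq : Measurable q)
    (hp0 : ∀ x, 0 ≤ p x) (hq0 : ∀ x, 0 ≤ q x)
    (P Q : Measure X) [IsProbabilityMeasure P] [IsProbabilityMeasure Q]
    (hP : P = μ.withDensity fun x => ENNReal.ofReal (p x))
    (hQ : Q = μ.withDensity fun x => ENNReal.ofReal (q x))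
    (hpos : ∀ᵐ x ∂μ, 0 < p x + q x) :
    klDiv' P ((2 : ℝ≥0∞)⁻¹ • (P + Q))
      = (∫ x, Real.log (p x / (p x + q x)) ∂P) + Real.log 2 := by
  set M : Measure X := (2 : ℝ≥0∞)⁻¹ • (P + Q) with hM
  haveI : IsFiniteMeasure M := by
    constructor
    simp only [hM, Measure.smul_apply, Measure.add_apply, measure_univ, smul_eq_mul]
    exact ENNReal.mul_lt_top (by simp) (by simp)
  -- M as withDensity
  set m : X → ℝ≥0∞ := fun x => (2 : ℝ≥0∞)⁻¹ * (ENNReal.ofReal (p x) + ENNReal.ofReal (q x))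
    with hm
  have hmm : Measurable m := by
    apply Measurable.const_mul
    exact (hp.ennreal_ofReal.add hq.ennreal_ofReal)
  have hMd : M = μ.withDensity m := by
    rw [hM, hP, hQ, ← withDensity_add_left hp.ennreal_ofReal,
      ← withDensity_smul' _ _ (by simp)]
    rfl
  -- absolute continuity
  have hPμ : P ≪ μ := hP ▸ withDensity_absolutelyContinuous μ _
  have hPM : P ≪ M := by
    have h1 : P ≪ P + Q := Measure.absolutelyContinuous_of_le (Measure.le_add_right le_rfl)
    exact h1.trans (Measure.absolutelyContinuous_smul (by simp))
  -- density of P wrt M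
  set f : X → ℝ≥0∞ := fun x => ENNReal.ofReal (2 * p x / (p x + q x)) with hf
  have hfm : Measurable f := by
    apply Measurable.ennreal_ofReal
    exact (hp.const_mul 2).div (hp.add hq)
  have hPMd : P = M.withDensity f := by
    rw [hMd, ← withDensity_mul μ hmm hfm, hP]
    apply withDensity_congr_ae
    filter_upwards [hpos] with x hx
    have hne : p x + q x ≠ 0 := ne_of_gt hx
    simp only [hm, hf, Pi.mul_apply]
    rw [← ENNReal.ofReal_add (hp0 x) (hq0 x), ← ENNReal.ofReal_ofNat 2,
      ← ENNReal.ofReal_inv_of_pos (by norm_num : (0:ℝ) < 2),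
      ← ENNReal.ofReal_mul (by positivity),
      ← ENNReal.ofReal_mul (by positivity)]
    congr 1
    field_simp
  -- rnDeriv
  have hrn : P.rnDeriv M =ᵐ[P] f := hPM.ae_le (hPMd ▸ Measure.rnDeriv_withDensity M hfm)
  -- a.e. positivity under P
  have hposP : ∀ᵐ x ∂P, 0 < p x + q x := hPμ.ae_le hpos
  have hpP : ∀ᵐ x ∂P, 0 < p x := by
    rw [ae_iff]
    have hms : MeasurableSet {x | ¬ 0 < p x} := (measurableSet_lt measurable_const hp).compl
    rw [hP, withDensity_apply _ hms]
    have hz : ∫⁻ x in {x | ¬ 0 < p x}, ENNReal.ofReal (p x) ∂μ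
        = ∫⁻ x in {x | ¬ 0 < p x}, (0:ℝ≥0∞) ∂μ := by
      apply setLIntegral_congr_fun hms
      intro x hx
      simp only [Set.mem_setOf_eq, not_lt] at hx
      simp [ENNReal.ofReal_eq_zero.2 hx]
    rw [hz]
    simp
  -- integrand equality a.e.
  have hcong : ∀ᵐ x ∂P,
      Real.log ((P.rnDeriv M x).toReal) = Real.log 2 + Real.log (p x / (p x + q x)) := by
    filter_upwards [hrn, hposP, hpP] with x h1 h2 h3
    rw [h1]
    simp only [hf]
    rw [ENNReal.toReal_ofReal (by positivity), mul_div_assoc,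
      Real.log_mul two_ne_zero (by positivity)]
  -- integrability of the log term
  have hgm : Measurable fun x => Real.log (p x / (p x + q x)) :=
    Real.measurable_log.comp (hp.div (hp.add hq))
  have hint : Integrable (fun x => Real.log (p x / (p x + q x))) P := by
    have hhm : Measurable fun x => q x / p x := hq.div hp
    have hbound : Integrable (fun x => q x / p x) P := by
      refine ⟨hhm.aestronglyMeasurable, ?_⟩
      rw [hasFiniteIntegral_iff_ofReal (Filter.Eventually.of_forall fun x =>
          div_nonneg (hq0 x) (hp0 x)), hP,
        lintegral_withDensity_eq_lintegral_mul _ hp.ennreal_ofReal hhm.ennreal_ofReal]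
      have hb : ∀ x, (fun x => ENNReal.ofReal (p x) * ENNReal.ofReal (q x / p x)) x
          ≤ ENNReal.ofReal (q x) := by
        intro x
        dsimp only
        rcases eq_or_lt_of_le (hp0 x) with h | h
        · simp [div_eq_mul_inv, ← h]
        · rw [← ENNReal.ofReal_mul (hp0 x), mul_div_cancel₀ _ (ne_of_gt h)]
      calc ∫⁻ x, ENNReal.ofReal (p x) * ENNReal.ofReal (q x / p x) ∂μ
          ≤ ∫⁻ x, ENNReal.ofReal (q x) ∂μ := lintegral_mono hb
        _ = Q Set.univ := by rw [hQ, withDensity_apply _ MeasurableSet.univ,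
              setLIntegral_univ]
        _ < ⊤ := by simp
    refine hbound.mono' hgm.aestronglyMeasurable ?_
    filter_upwards [hposP, hpP] with x h2 h3
    have hle1 : p x / (p x + q x) ≤ 1 := by
      rw [div_le_one h2]; linarith [hq0 x]
    have hgt0 : 0 < p x / (p x + q x) := by positivity
    rw [Real.norm_eq_abs, abs_of_nonpos (Real.log_nonpos hgt0.le hle1)]
    have : -Real.log (p x / (p x + q x)) = Real.log ((p x + q x) / p x) := by
      rw [← Real.log_inv]; congr 1; rw [inv_div]
    rw [this]
    calc Real.log ((p x + q x) / p x) ≤ (p x + q x) / p x - 1 :=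
          Real.log_le_sub_one_of_pos (by positivity)
      _ = q x / p x := by field_simp; ring
  -- conclude
  calc klDiv' P M = ∫ x, (Real.log 2 + Real.log (p x / (p x + q x))) ∂P :=
        integral_congr_ae hcong
    _ = ∫ x, Real.log 2 ∂P + ∫ x, Real.log (p x / (p x + q x)) ∂P :=
        integral_add (integrable_const _) hint
    _ = (∫ x, Real.log (p x / (p x + q x)) ∂P) + Real.log 2 := by
        simp [add_comm]

theorem optimal_discriminator_attains_js
    {X : Type*} [MeasurableSpace X]
    (μ : Measure X) [SigmaFinite μ]
    (p q : X → ℝ) (hp : Measurable p) (hq : Measurable q)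
    (hp0 : ∀ x, 0 ≤ p x) (hq0 : ∀ x, 0 ≤ q x)
    (P Q : Measure X) [IsProbabilityMeasure P] [IsProbabilityMeasure Q]
    (hP : P = μ.withDensity fun x => ENNReal.ofReal (p x))
    (hQ : Q = μ.withDensity fun x => ENNReal.ofReal (q x))
    (hpos : ∀ᵐ x ∂μ, 0 < p x + q x) :
    (∫ x, Real.log (p x / (p x + q x)) ∂P)
      + (∫ x, Real.log (1 - p x / (p x + q x)) ∂Q) =
      2 * jsDiv' P Q - Real.log 4 := by
  have hposQ : ∀ᵐ x ∂μ, 0 < q x + p x := by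
    filter_upwards [hpos] with x hx; linarith
  have hkP := aux_kl μ p q hp hq hp0 hq0 P Q hP hQ hpos
  have hkQ := aux_kl μ q p hq hp hq0 hp0 Q P hQ hP hposQ
  have hQμ : Q ≪ μ := hQ ▸ withDensity_absolutelyContinuous μ _
  have hIQ : (∫ x, Real.log (1 - p x / (p x + q x)) ∂Q)
      = ∫ x, Real.log (q x / (q x + p x)) ∂Q := by
    apply integral_congr_ae
    filter_upwards [hQμ.ae_le hpos] with x hx
    congr 1
    rw [add_comm (q x)]
    field_simp
    ring
  have hcomm : Q + P = P + Q := add_comm Q P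
  rw [hcomm] at hkQ
  have hlog4 : Real.log 4 = 2 * Real.log 2 := by
    rw [show (4:ℝ) = 2 ^ 2 by norm_num, Real.log_pow]
    push_cast; ring
  rw [hIQ, jsDiv', hkP, hkQ, hlog4]
  ring
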